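/- arXiv:1805.10148 — 3 statements merged into one kernel-verified Lean document; each statement's English description precedes it below -/
import Mathlib

section
/- Let 0 < α < 1 and η ≥ 0 be real numbers, let γ = 2·sin(απ)·Γ(3/2)/π^{3/2} and p(ξ) = |ξ|^{(2α−1)/2}, and let U : [0,∞) → ℝ be continuous. For t ≥ 0 and ξ ∈ ℝ define φ(t,ξ) = p(ξ)·∫₀ᵗ exp(−(ξ² + η)(t − s))·U(s) ds (this is the unique solution of ∂ₜφ(t,ξ) + (ξ² + η)φ(t,ξ) = p(ξ)U(t) with φ(0,ξ) = 0). Then for every t ≥ 0 the output O(t) = γ·∫_ℝ p(ξ)·φ(t,ξ) dξ is a well-defined (absolutely convergent) Lebesgue integral and equals the exponentially modified fractional integral I^{1−α,η}U(t) = (1/Γ(1−α))·∫₀ᵗ (t − s)^{−α}·exp(−η(t − s))·U(s) ds. -/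
open MeasureTheory Real

private lemma meas_abs_rpow (c : ℝ) : Measurable fun x : ℝ => |x| ^ c := by
  have h : (fun x : ℝ => |x| ^ c) =
      fun x => if x = 0 then (0 : ℝ) ^ c else Real.exp (Real.log |x| * c) := by
    funext x
    by_cases hx : x = 0
    · simp [hx]
    · rw [if_neg hx, Real.rpow_def_of_pos (abs_pos.mpr hx)]
  rw [h]
  exact Measurable.ite (measurableSet_eq) measurable_const
    (Real.measurable_exp.comp ((Real.measurable_log.comp measurable_abs).mul measurable_const))

private lemma aux_integrable {c b : ℝ} (hc : -1 < c) (hb : 0 < b) :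
    Integrable fun x : ℝ => |x| ^ c * Real.exp (-b * x ^ 2) := by
  have h0 : IntegrableOn (fun x : ℝ => |x| ^ c * Real.exp (-b * x ^ 2)) (Set.Ioi 0) := by
    refine (integrableOn_rpow_mul_exp_neg_mul_sq hb hc).congr_fun (fun x hx => ?_)
      measurableSet_Ioi
    rw [abs_of_pos hx]
  have h1 : IntegrableOn (fun x : ℝ => |x| ^ c * Real.exp (-b * x ^ 2)) (Set.Iic 0) := by
    rw [← Measure.map_neg_eq_self (volume : Measure ℝ)]
    have m : MeasurableEmbedding fun x : ℝ => -x := (Homeomorph.neg ℝ).measurableEmbedding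
    rw [m.integrableOn_map_iff]
    simp only [Function.comp_def, abs_neg, neg_sq, Set.neg_preimage, Set.neg_Iic, neg_zero]
    exact Iff.mpr integrableOn_Ici_iff_integrableOn_Ioi h0
  rw [← integrableOn_univ, ← Set.Iic_union_Ioi (a := (0 : ℝ)), integrableOn_union]
  exact ⟨h1, h0⟩

private lemma aux_value {α b : ℝ} (hα0 : 0 < α) (hα1 : α < 1) (hb : 0 < b) :
    ∫ x : ℝ, |x| ^ (2 * α - 1) * Real.exp (-b * x ^ 2) = Real.Gamma α * b ^ (-α) := by
  have h2abs := integral_comp_abs (f := fun y : ℝ => y ^ (2 * α - 1) * Real.exp (-b * y ^ 2))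
  rw [show (fun x : ℝ => |x| ^ (2 * α - 1) * Real.exp (-b * x ^ 2))
      = fun x : ℝ => |x| ^ (2 * α - 1) * Real.exp (-b * |x| ^ 2) from
    funext fun x => by rw [sq_abs], h2abs]
  have h2 : ∫ x in Set.Ioi (0 : ℝ), x ^ (2 * α - 1) * Real.exp (-b * x ^ 2)
      = b ^ (-(2 * α - 1 + 1) / 2) * (1 / 2) * Real.Gamma ((2 * α - 1 + 1) / 2) := by
    rw [← integral_rpow_mul_exp_neg_mul_rpow (by norm_num : (0:ℝ) < 2) (by linarith) hb]
    refine setIntegral_congr_fun measurableSet_Ioi fun x hx => ?_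
    rw [Real.rpow_two]
  rw [h2, show (2 * α - 1 + 1) / 2 = α by ring, show -(2 * α - 1 + 1) / 2 = -α by ring]
  ring

/-- Proposition 2.1: the diffusive realization of the exponentially modified
fractional integral `I^{1-α,η}`. -/
theorem stmt_0 (α η : ℝ) (hα0 : 0 < α) (hα1 : α < 1) (hη : 0 ≤ η)
    (U : ℝ → ℝ) (hU : ContinuousOn U (Set.Ici 0))
    (p : ℝ → ℝ) (hp : ∀ ξ : ℝ, p ξ = |ξ| ^ ((2 * α - 1) / 2))
    (γ : ℝ) (hγ : γ = 2 * Real.sin (α * π) * Real.Gamma (3 / 2) / π ^ ((3 : ℝ) / 2))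
    (φ : ℝ → ℝ → ℝ)
    (hφ : ∀ t ξ : ℝ, φ t ξ =
      p ξ * ∫ s in (0 : ℝ)..t, Real.exp (-(ξ ^ 2 + η) * (t - s)) * U s) :
    ∀ t : ℝ, 0 ≤ t →
      Integrable (fun ξ : ℝ => p ξ * φ t ξ) ∧
      γ * (∫ ξ : ℝ, p ξ * φ t ξ) =
        (1 / Real.Gamma (1 - α)) *
          ∫ s in (0 : ℝ)..t, (t - s) ^ (-α) * Real.exp (-η * (t - s)) * U s := by
  intro t ht
  have hc1 : (-1 : ℝ) < 2 * α - 1 := by linarith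
  -- extended version of U
  set V : ℝ → ℝ := fun s => U (max s 0) with hVdef
  have hVc : Continuous V := by
    apply hU.comp_continuous (continuous_id.max continuous_const)
    intro x; exact Set.mem_Ici.mpr (le_max_right x 0)
  have hVU : ∀ s ∈ Set.Ioc (0 : ℝ) t, V s = U s := by
    intro s hs
    simp only [hVdef, max_eq_left hs.1.le]
  -- p squared
  have hpp : ∀ ξ : ℝ, p ξ * p ξ = |ξ| ^ (2 * α - 1) := by
    intro ξ
    rw [hp ξ]
    have h1 : |ξ| ^ ((2 * α - 1) / 2) * |ξ| ^ ((2 * α - 1) / 2)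
        = (|ξ| ^ ((2 * α - 1) / 2)) ^ (2 : ℝ) := by
      rw [Real.rpow_two]; ring
    rw [h1, ← Real.rpow_mul (abs_nonneg ξ)]
    norm_num
  -- the kernel
  set F : ℝ × ℝ → ℝ :=
    fun q => |q.2| ^ (2 * α - 1) * (Real.exp (-(q.2 ^ 2 + η) * (t - q.1)) * V q.1) with hFdef
  set μ : Measure ℝ := volume.restrict (Set.Ioc (0 : ℝ) t) with hμdef
  have hPφ : ∀ ξ : ℝ, p ξ * φ t ξ = ∫ s in Set.Ioc (0 : ℝ) t, F (s, ξ) := by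
    intro ξ
    rw [hφ t ξ, ← mul_assoc, hpp ξ, intervalIntegral.integral_of_le ht,
      ← MeasureTheory.integral_const_mul]
    refine setIntegral_congr_fun measurableSet_Ioc fun s hs => ?_
    simp only [hFdef]
    rw [hVU s hs]
  -- splitting the kernel
  have hsplit : ∀ s ξ : ℝ, F (s, ξ)
      = (Real.exp (-η * (t - s)) * V s)
        * (|ξ| ^ (2 * α - 1) * Real.exp (-(t - s) * ξ ^ 2)) := by
    intro s ξ
    simp only [hFdef]
    rw [show -(ξ ^ 2 + η) * (t - s) = -(t - s) * ξ ^ 2 + -η * (t - s) by ring, Real.exp_add]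
    ring
  have hnorm : ∀ s ξ : ℝ, ‖F (s, ξ)‖
      = (Real.exp (-η * (t - s)) * |V s|)
        * (|ξ| ^ (2 * α - 1) * Real.exp (-(t - s) * ξ ^ 2)) := by
    intro s ξ
    rw [hsplit s ξ, Real.norm_eq_abs]
    simp only [abs_mul]
    rw [abs_of_pos (Real.exp_pos _), abs_of_pos (Real.exp_pos _),
      abs_of_nonneg (Real.rpow_nonneg (abs_nonneg ξ) _)]
  -- measurability
  have hFmeas : AEStronglyMeasurable F (μ.prod volume) := by
    refine Measurable.aestronglyMeasurable ?_
    apply ((meas_abs_rpow (2 * α - 1)).comp measurable_snd).mul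
    refine Measurable.mul ?_ (hVc.measurable.comp measurable_fst)
    exact Real.measurable_exp.comp
      ((((measurable_snd.pow measurable_const).add measurable_const).neg).mul
        (measurable_const.sub measurable_fst))
  -- a.e. s is in Ioo 0 t
  have hae : ∀ᵐ s ∂μ, s ∈ Set.Ioc (0 : ℝ) t ∧ s ≠ t := by
    have h1 : ∀ᵐ s : ℝ ∂volume, s ≠ t := by
      rw [ae_iff]
      simp only [ne_eq, not_not, Set.setOf_eq_eq_singleton]
      exact measure_singleton t
    filter_upwards [ae_restrict_mem measurableSet_Ioc, ae_restrict_of_ae h1] with s h1 h2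
    exact ⟨h1, h2⟩
  -- slice integrability and value
  have hslice : ∀ s : ℝ, s ∈ Set.Ioc (0 : ℝ) t → s ≠ t →
      Integrable (fun ξ => F (s, ξ)) ∧
      ∫ ξ : ℝ, F (s, ξ)
        = Real.Gamma α * ((t - s) ^ (-α) * (Real.exp (-η * (t - s)) * V s)) ∧
      ∫ ξ : ℝ, ‖F (s, ξ)‖
        = (Real.exp (-η * (t - s)) * |V s|) * (Real.Gamma α * (t - s) ^ (-α)) := by
    intro s hs hst
    have hts : 0 < t - s := sub_pos.mpr (lt_of_le_of_ne hs.2 hst)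
    have hInt := aux_integrable hc1 hts
    refine ⟨?_, ?_, ?_⟩
    · have he : (fun ξ => F (s, ξ)) = fun ξ =>
          (Real.exp (-η * (t - s)) * V s)
            * (|ξ| ^ (2 * α - 1) * Real.exp (-(t - s) * ξ ^ 2)) :=
        funext fun ξ => hsplit s ξ
      rw [he]
      exact hInt.const_mul _
    · simp_rw [hsplit s]
      rw [MeasureTheory.integral_const_mul, aux_value hα0 hα1 hts]
      ring
    · simp_rw [hnorm s]
      rw [MeasureTheory.integral_const_mul, aux_value hα0 hα1 hts]
  -- integrability of the norm integral majorant
  have hrpow : IntegrableOn (fun s : ℝ => (t - s) ^ (-α)) (Set.Ioc 0 t) := by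
    have h1 := (intervalIntegral.intervalIntegrable_rpow' (a := t) (b := 0)
      (by linarith : (-1 : ℝ) < -α)).comp_sub_left t
    simp only [sub_self, sub_zero] at h1
    exact h1.1
  obtain ⟨M, hM⟩ := (isCompact_Icc (a := (0:ℝ)) (b := t)).exists_bound_of_continuousOn
    hVc.continuousOn
  have hM0 : 0 ≤ M := le_trans (norm_nonneg (V 0)) (hM 0 ⟨le_refl 0, ht⟩)
  have hΓpos : 0 < Real.Gamma α := Real.Gamma_pos_of_pos hα0
  -- product integrability
  have hF : Integrable F (μ.prod volume) := by
    rw [MeasureTheory.integrable_prod_iff hFmeas]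
    constructor
    · filter_upwards [hae] with s hs
      exact (hslice s hs.1 hs.2).1
    · have hmaj : Integrable (fun s : ℝ => Real.Gamma α * M * (t - s) ^ (-α)) μ :=
        hrpow.const_mul _
      refine hmaj.mono' ?_ ?_
      · -- measurability of s ↦ ∫ ξ, ‖F (s, ξ)‖
        exact hFmeas.norm.integral_prod_right'
      · filter_upwards [hae] with s hs
        rw [(hslice s hs.1 hs.2).2.2]
        have h1 : Real.exp (-η * (t - s)) ≤ 1 := by
          rw [Real.exp_le_one_iff]
          have : 0 ≤ t - s := sub_nonneg.mpr hs.1.2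
          nlinarith
        have h2 : |V s| ≤ M := hM s ⟨hs.1.1.le, hs.1.2⟩
        have h3 : (0:ℝ) ≤ (t - s) ^ (-α) :=
          Real.rpow_nonneg (sub_nonneg.mpr hs.1.2) _
        have h4 : (0:ℝ) ≤ Real.exp (-η * (t - s)) * |V s| := by positivity
        rw [Real.norm_eq_abs, abs_of_nonneg (by positivity)]
        calc Real.exp (-η * (t - s)) * |V s| * (Real.Gamma α * (t - s) ^ (-α))
            ≤ 1 * M * (Real.Gamma α * (t - s) ^ (-α)) := by
              apply mul_le_mul_of_nonneg_right _ (by positivity)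
              apply mul_le_mul h1 h2 (abs_nonneg _) (by norm_num)
          _ = Real.Gamma α * M * (t - s) ^ (-α) := by ring
  -- the γ Γ identity
  have hsinpos : 0 < Real.sin (α * π) := by
    apply Real.sin_pos_of_pos_of_lt_pi (by positivity)
    calc α * π < 1 * π := by
          exact mul_lt_mul_of_pos_right hα1 Real.pi_pos
      _ = π := one_mul π
  have hΓ1 : Real.Gamma (1 - α) ≠ 0 := (Real.Gamma_pos_of_pos (by linarith)).ne'
  have hγ2 : γ = Real.sin (α * π) / π := by
    have h32 : Real.Gamma ((3:ℝ) / 2) = Real.sqrt π / 2 := by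
      rw [show (3 : ℝ) / 2 = 1 / 2 + 1 by norm_num,
        Real.Gamma_add_one (by norm_num), Real.Gamma_one_half_eq]
      ring
    have hpi32 : (π : ℝ) ^ ((3 : ℝ) / 2) = π * Real.sqrt π := by
      rw [show (3 : ℝ) / 2 = 1 + 1 / 2 by norm_num, Real.rpow_add Real.pi_pos,
        Real.rpow_one, ← Real.sqrt_eq_rpow]
    have hs : Real.sqrt π ≠ 0 := by positivity
    rw [hγ, h32, hpi32]
    field_simp
  have hγΓ : γ * Real.Gamma α = 1 / Real.Gamma (1 - α) := by
    have hrefl := Real.Gamma_mul_Gamma_one_sub α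
    rw [mul_comm π α] at hrefl
    rw [hγ2, eq_div_iff hΓ1, mul_assoc, hrefl, div_mul_div_comm]
    rw [div_eq_one_iff_eq (by positivity)]
    ring
  -- conclusion
  have hInt1 : Integrable (fun ξ : ℝ => p ξ * φ t ξ) := by
    have h1 : Integrable (fun ξ : ℝ => ∫ s, F (s, ξ) ∂μ) volume :=
      hF.integral_prod_right
    refine h1.congr (Filter.Eventually.of_forall fun ξ => ?_)
    exact (hPφ ξ).symm
  refine ⟨hInt1, ?_⟩
  have hswap : ∫ ξ : ℝ, p ξ * φ t ξ
      = ∫ s, (∫ ξ : ℝ, F (s, ξ)) ∂μ := by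
    rw [show (fun ξ : ℝ => p ξ * φ t ξ) = fun ξ => ∫ s, F (s, ξ) ∂μ from
      funext fun ξ => hPφ ξ]
    exact (MeasureTheory.integral_integral_swap hF).symm
  rw [hswap]
  have hval : ∫ s, (∫ ξ : ℝ, F (s, ξ)) ∂μ
      = Real.Gamma α * ∫ s in Set.Ioc (0 : ℝ) t,
          (t - s) ^ (-α) * (Real.exp (-η * (t - s)) * V s) := by
    rw [← MeasureTheory.integral_const_mul]
    apply integral_congr_ae
    filter_upwards [hae] with s hs
    exact (hslice s hs.1 hs.2).2.1
  rw [hval]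
  have hfin : ∫ s in Set.Ioc (0 : ℝ) t, (t - s) ^ (-α) * (Real.exp (-η * (t - s)) * V s)
      = ∫ s in (0 : ℝ)..t, (t - s) ^ (-α) * Real.exp (-η * (t - s)) * U s := by
    rw [intervalIntegral.integral_of_le ht]
    refine setIntegral_congr_fun measurableSet_Ioc fun s hs => ?_
    rw [hVU s hs]
    ring
  rw [hfin, ← mul_assoc, hγΓ]
end

section
/- Let 0 < α < 1, η > 0 and ω ∈ ℝ with ω ≠ 0. Then ∫₀^∞ ρ^{2α−1} / ((ρ² + η)² + ω²) dρ = −π·Im((η + iω)^{α−1}) / (2·ω·sin(απ)), where (η + iω)^{α−1} denotes the principal-branch complex power and Im denotes the imaginary part. -/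
open MeasureTheory Real Set Complex Topology Filter

lemma integrableOn_aux {α ε : ℝ} (hα0 : 0 < α) (hα1 : α < 1) (hε : 0 < ε) (n : ℕ) (hn : 1 ≤ n) :
    IntegrableOn (fun ρ : ℝ => ρ ^ (2*α-1) / (ρ^2+ε)^n) (Ioi 0) := by
  have hcont : ContinuousOn (fun ρ : ℝ => ρ ^ (2*α-1) / (ρ^2+ε)^n) (Ioi 0) := by
    apply ContinuousOn.div
    · exact fun x hx => (Real.continuousAt_rpow_const x _ (Or.inl (ne_of_gt hx))).continuousWithinAt
    · fun_prop
    · intro x hx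
      positivity
  rw [← Set.Ioc_union_Ioi_eq_Ioi (zero_le_one : (0:ℝ) ≤ 1), integrableOn_union]
  constructor
  · have hbig : IntegrableOn (fun ρ : ℝ => ρ ^ (2*α-1) / ε^n) (Ioc 0 1) := by
      apply Integrable.div_const
      exact (intervalIntegrable_iff_integrableOn_Ioc_of_le zero_le_one).mp
        (intervalIntegral.intervalIntegrable_rpow' (by linarith))
    refine Integrable.mono hbig ((hcont.mono (Ioc_subset_Ioi_self)).aestronglyMeasurable measurableSet_Ioc) ?_
    filter_upwards [ae_restrict_mem measurableSet_Ioc] with x hx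
    have hx0 : 0 < x := hx.1
    rw [Real.norm_eq_abs, Real.norm_eq_abs, _root_.abs_of_nonneg (by positivity)]
    refine le_trans ?_ (le_abs_self _)
    apply div_le_div_of_nonneg_left (by positivity) (by positivity)
    exact pow_le_pow_left₀ hε.le (by nlinarith) n
  · have hbig : IntegrableOn (fun ρ : ℝ => ρ ^ (2*α-1-2*n)) (Ioi 1) :=
      integrableOn_Ioi_rpow_of_lt (by
        have : (1:ℝ) ≤ n := by exact_mod_cast hn
        nlinarith) one_pos
    refine Integrable.mono hbig ((hcont.mono (Ioi_subset_Ioi zero_le_one)).aestronglyMeasurable measurableSet_Ioi) ?_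
    filter_upwards [ae_restrict_mem measurableSet_Ioi] with x hx
    have hx1 : (1:ℝ) < x := hx
    have hx0 : 0 < x := lt_trans one_pos hx1
    rw [Real.norm_eq_abs, Real.norm_eq_abs, _root_.abs_of_nonneg (by positivity)]
    refine le_trans ?_ (le_abs_self _)
    rw [sub_eq_add_neg (2*α-1), Real.rpow_add hx0, Real.rpow_neg hx0.le, ← div_eq_mul_inv]
    apply div_le_div_of_nonneg_left (by positivity) (by positivity)
    calc x ^ (2*(n:ℝ)) = (x^2)^n := by
          rw [← Real.rpow_natCast (x^2) n, ← Real.rpow_natCast x 2, ← Real.rpow_mul hx0.le]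
          ring_nf
      _ ≤ (x^2+ε)^n := pow_le_pow_left₀ (by positivity) (by linarith) n

lemma beta_val {α : ℝ} (hα0 : 0 < α) (hα1 : α < 1) :
    ∫ x in Ioo (0:ℝ) 1, x ^ (α-1) * (1-x) ^ (-α) = π / Real.sin (π*α) := by
  have hsin : Real.sin (π*α) ≠ 0 :=
    ne_of_gt (Real.sin_pos_of_pos_of_lt_pi (by positivity) (by nlinarith [Real.pi_pos]))
  have h1 := Complex.Gamma_mul_Gamma_eq_betaIntegral
    (s := (α:ℂ)) (t := 1 - (α:ℂ)) (by simpa using hα0) (by simp [Complex.sub_re]; simpa using hα1)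
  rw [add_sub_cancel, Complex.Gamma_one, one_mul, Complex.Gamma_mul_Gamma_one_sub] at h1
  have h2 : Complex.betaIntegral (α:ℂ) (1 - (α:ℂ)) =
      ((∫ x in Ioo (0:ℝ) 1, x ^ (α-1) * (1-x) ^ (-α) : ℝ) : ℂ) := by
    rw [Complex.betaIntegral, intervalIntegral.integral_of_le zero_le_one,
      MeasureTheory.integral_Ioc_eq_integral_Ioo]
    rw [show ((∫ x in Ioo (0:ℝ) 1, x ^ (α-1) * (1-x) ^ (-α) : ℝ) : ℂ)
        = ∫ x in Ioo (0:ℝ) 1, ((x ^ (α-1) * (1-x) ^ (-α) : ℝ) : ℂ) from integral_ofReal.symm]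
    refine setIntegral_congr_fun measurableSet_Ioo (fun x hx => ?_)
    have hx0 : (0:ℝ) ≤ x := hx.1.le
    have hx1 : (0:ℝ) ≤ 1 - x := by linarith [hx.2]
    have e1 : ((α:ℂ) - 1) = ((α - 1 : ℝ) : ℂ) := by push_cast; ring
    have e2 : (1 - (α:ℂ) - 1) = ((-α : ℝ) : ℂ) := by push_cast; ring
    rw [e1, e2, show (1 - (x:ℂ)) = ((1 - x : ℝ) : ℂ) by push_cast; ring,
      ← Complex.ofReal_cpow hx0, ← Complex.ofReal_cpow hx1, ← Complex.ofReal_mul]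
  rw [h2] at h1
  have h3 : ((π : ℂ) / Complex.sin (π * α)) = ((π / Real.sin (π * α) : ℝ) : ℂ) := by
    rw [Complex.ofReal_div, Complex.ofReal_sin, Complex.ofReal_mul]
  rw [h3] at h1
  exact_mod_cast h1.symm

lemma J_val {α : ℝ} (hα0 : 0 < α) (hα1 : α < 1) :
    ∫ σ in Ioi (0:ℝ), σ ^ (2*α-1) / (σ^2+1) = π / (2 * Real.sin (π*α)) := by
  set f : ℝ → ℝ := fun σ => σ^2 / (1 + σ^2) with hf_def
  set f' : ℝ → ℝ := fun σ => 2*σ / (1 + σ^2)^2 with hf'_def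
  have hpos : ∀ σ : ℝ, (0:ℝ) < 1 + σ^2 := fun σ => by positivity
  have hderiv : ∀ σ ∈ Ioi (0:ℝ), HasDerivWithinAt f (f' σ) (Ioi 0) σ := by
    intro σ hσ
    have h : HasDerivAt f ((2*σ*(1+σ^2) - σ^2*(2*σ)) / (1+σ^2)^2) σ := by
      have h0 := (hasDerivAt_pow 2 σ).div
        ((hasDerivAt_pow 2 σ).const_add 1) (ne_of_gt (hpos σ))
      simp at h0
      exact h0
    have : (2*σ*(1+σ^2) - σ^2*(2*σ)) / (1+σ^2)^2 = f' σ := by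
      rw [hf'_def]; field_simp; ring
    exact (this ▸ h).hasDerivWithinAt
  have hmono : StrictMonoOn f (Ioi 0) := by
    intro x hx y hy hxy
    rw [hf_def]
    simp only
    rw [div_lt_div_iff₀ (hpos x) (hpos y)]
    have hx0 : (0:ℝ) < x := hx
    nlinarith
  have himg : f '' (Ioi 0) = Ioo 0 1 := by
    ext y
    constructor
    · rintro ⟨x, hx, rfl⟩
      have hx0 : (0:ℝ) < x := hx
      constructor
      · positivity
      · rw [div_lt_one (hpos x)]; linarith
    · intro hy
      refine ⟨Real.sqrt (y / (1 - y)), ?_, ?_⟩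
      · have : 0 < y / (1-y) := div_pos hy.1 (by linarith [hy.2])
        exact Real.sqrt_pos.mpr this
      · have h1 : (0:ℝ) < 1 - y := by linarith [hy.2]
        have h2 : Real.sqrt (y / (1-y)) ^ 2 = y / (1-y) :=
          Real.sq_sqrt (le_of_lt (div_pos hy.1 h1))
        rw [hf_def]
        simp only [h2]
        field_simp
        ring
  have key := integral_image_eq_integral_abs_deriv_smul measurableSet_Ioi hderiv hmono.injOn
      (fun x : ℝ => x ^ (α-1) * (1-x) ^ (-α))
  rw [himg, beta_val hα0 hα1] at key
  have hcongr : ∫ x in Ioi (0:ℝ), |f' x| • (f x ^ (α-1) * (1 - f x) ^ (-α))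
      = ∫ σ in Ioi (0:ℝ), 2 * (σ ^ (2*α-1) / (σ^2+1)) := by
    refine setIntegral_congr_fun measurableSet_Ioi (fun σ hσ => ?_)
    have hσ0 : (0:ℝ) < σ := hσ
    have h1 : 1 - f σ = 1 / (1 + σ^2) := by rw [hf_def]; field_simp; ring
    have h2 : |f' σ| = 2*σ / (1+σ^2)^2 := abs_of_nonneg (by positivity)
    rw [smul_eq_mul, h2, h1, hf_def]
    simp only
    rw [Real.div_rpow (by positivity) (hpos σ).le, Real.div_rpow (by positivity) (hpos σ).le,
      Real.one_rpow, Real.rpow_neg (hpos σ).le]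
    rw [show (σ^2 : ℝ) ^ (α-1) = σ ^ (2*(α-1)) by
      rw [← Real.rpow_natCast σ 2, ← Real.rpow_mul hσ0.le]; norm_num]
    rw [show (2*α-1 : ℝ) = 2*(α-1) + 1 by ring, Real.rpow_add hσ0, Real.rpow_one]
    have e5 : (1+σ^2:ℝ)^α = (1+σ^2)^(α-1) * (1+σ^2) := by
      rw [← Real.rpow_add_one (ne_of_gt (hpos σ)) (α-1)]; norm_num
    rw [e5]
    have hB : ((1+σ^2:ℝ))^(α-1) ≠ 0 := ne_of_gt (Real.rpow_pos_of_pos (hpos σ) _)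
    field_simp
    ring
  rw [hcongr, MeasureTheory.integral_const_mul 2] at key
  have hsin : 0 < Real.sin (π*α) :=
    Real.sin_pos_of_pos_of_lt_pi (by positivity) (by nlinarith [Real.pi_pos])
  rw [eq_div_iff (by positivity : (2 * Real.sin (π*α)) ≠ 0)]
  rw [div_eq_iff (ne_of_gt hsin)] at key
  linarith

lemma F_real {α : ℝ} (hα0 : 0 < α) (hα1 : α < 1) {c : ℝ} (hc : 0 < c) :
    ∫ ρ in Ioi (0:ℝ), ρ ^ (2*α-1) / (ρ^2+c) = c ^ (α-1) * (π / (2 * Real.sin (π*α))) := by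
  set b := Real.sqrt c with hb_def
  have hb : 0 < b := Real.sqrt_pos.mpr hc
  have hb2 : b^2 = c := Real.sq_sqrt hc.le
  have key := MeasureTheory.integral_comp_mul_left_Ioi
    (fun ρ => ρ ^ (2*α-1) / (ρ^2+c)) 0 hb
  rw [mul_zero] at key
  have hcongr : ∫ x in Ioi (0:ℝ), (fun ρ => ρ ^ (2*α-1) / (ρ^2+c)) (b * x)
      = ∫ x in Ioi (0:ℝ), (b ^ (2*α-1) / c) * (x ^ (2*α-1) / (x^2+1)) := by
    refine setIntegral_congr_fun measurableSet_Ioi (fun x hx => ?_)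
    have hx0 : (0:ℝ) < x := hx
    simp only
    rw [Real.mul_rpow hb.le hx0.le, mul_pow, hb2]
    rw [show c * x^2 + c = c * (x^2+1) by ring]
    field_simp
  rw [hcongr, MeasureTheory.integral_const_mul, J_val hα0 hα1, smul_eq_mul] at key
  rw [eq_comm, inv_mul_eq_iff_eq_mul₀ (ne_of_gt hb)] at key
  rw [key]
  have h1 : c ^ (α-1) = b ^ (2*α-2) := by
    rw [← hb2, ← Real.rpow_natCast b 2, ← Real.rpow_mul hb.le]
    norm_num
    ring_nf
  have h2 : b * b ^ (2*α-1) = b ^ (2*α) := by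
    nth_rewrite 1 [← Real.rpow_one b]
    rw [← Real.rpow_add hb]
    ring_nf
  have h3 : b ^ (2*α) / c = b ^ (2*α-2) := by
    rw [← hb2, ← Real.rpow_natCast b 2, ← Real.rpow_sub hb]
    norm_num
  rw [h1, show b * (b ^ (2*α-1) / c * (π / (2 * Real.sin (π*α))))
      = (b * b ^ (2*α-1)) / c * (π / (2 * Real.sin (π*α))) by ring, h2, h3]

section CPart
variable {α : ℝ}

noncomputable def Fc (α : ℝ) (z : ℂ) : ℂ :=
  ∫ ρ in Ioi (0:ℝ), ((ρ ^ (2*α-1) : ℝ) : ℂ) / ((ρ:ℂ)^2 + z)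

noncomputable def Gc (α : ℝ) (z : ℂ) : ℂ :=
  ((π / (2 * Real.sin (π*α)) : ℝ) : ℂ) * z ^ ((α:ℂ) - 1)

lemma denom_ne {z : ℂ} (hz : 0 < z.re) (ρ : ℝ) : ((ρ:ℂ)^2 + z) ≠ 0 := by
  intro h
  have : ((ρ:ℂ)^2 + z).re = 0 := by rw [h]; simp
  simp only [Complex.add_re, ← Complex.ofReal_pow, Complex.ofReal_re] at this
  nlinarith [sq_nonneg ρ]

lemma norm_denom_ge {z : ℂ} {ε : ℝ} (hz : ε ≤ z.re) (ρ : ℝ) :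
    ρ^2 + ε ≤ ‖(ρ:ℂ)^2 + z‖ := by
  refine le_trans ?_ (Complex.re_le_norm _)
  simp only [Complex.add_re, ← Complex.ofReal_pow, Complex.ofReal_re]
  linarith

lemma Fc_integrable (hα0 : 0 < α) (hα1 : α < 1) {z : ℂ} (hz : 0 < z.re) :
    IntegrableOn (fun ρ : ℝ => ((ρ ^ (2*α-1) : ℝ) : ℂ) / ((ρ:ℂ)^2 + z)) (Ioi 0) := by
  have hmeas : AEStronglyMeasurable (fun ρ : ℝ => ((ρ ^ (2*α-1) : ℝ) : ℂ) / ((ρ:ℂ)^2 + z))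
      (volume.restrict (Ioi 0)) := by
    refine ContinuousOn.aestronglyMeasurable ?_ measurableSet_Ioi
    apply ContinuousOn.div
    · exact Complex.continuous_ofReal.comp_continuousOn
        (fun x hx => (Real.continuousAt_rpow_const x _ (Or.inl (ne_of_gt hx))).continuousWithinAt)
    · fun_prop
    · exact fun x _ => denom_ne hz x
  have hb := integrableOn_aux hα0 hα1 hz 1 le_rfl
  simp only [pow_one] at hb
  refine Integrable.mono hb hmeas ?_
  filter_upwards [ae_restrict_mem measurableSet_Ioi] with ρ hρ
  have hρ0 : (0:ℝ) < ρ := hρ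
  rw [norm_div, Complex.norm_real, Real.norm_eq_abs, Real.norm_eq_abs,
    _root_.abs_of_nonneg (by positivity : (0:ℝ) ≤ ρ ^ (2*α-1) / (ρ^2+z.re)),
    _root_.abs_of_nonneg (by positivity : (0:ℝ) ≤ ρ ^ (2*α-1))]
  exact div_le_div_of_nonneg_left (by positivity) (by positivity) (by simpa using norm_denom_ge (le_refl z.re) ρ)

lemma Fc_real (hα0 : 0 < α) (hα1 : α < 1) {c : ℝ} (hc : 0 < c) :
    Fc α (c : ℂ) = ((c ^ (α-1) * (π / (2 * Real.sin (π*α))) : ℝ) : ℂ) := by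
  rw [Fc, ← F_real hα0 hα1 hc,
    show ((∫ ρ in Ioi (0:ℝ), ρ ^ (2*α-1) / (ρ^2+c) : ℝ) : ℂ)
      = ∫ ρ in Ioi (0:ℝ), ((ρ ^ (2*α-1) / (ρ^2+c) : ℝ) : ℂ) from integral_ofReal.symm]
  refine setIntegral_congr_fun measurableSet_Ioi (fun ρ _ => ?_)
  push_cast
  rfl

lemma Fc_diff (hα0 : 0 < α) (hα1 : α < 1) :
    DifferentiableOn ℂ (Fc α) {z : ℂ | 0 < z.re} := by
  intro z₀ hz₀
  have hz₀' : 0 < z₀.re := hz₀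
  set ε : ℝ := z₀.re / 2 with hε_def
  have hε : 0 < ε := by positivity
  have hball : ∀ z ∈ Metric.ball z₀ ε, ε ≤ z.re := by
    intro z hz
    have h1 : |(z - z₀).re| ≤ ‖z - z₀‖ := Complex.abs_re_le_norm _
    rw [Metric.mem_ball, Complex.dist_eq] at hz
    have : |(z - z₀).re| < ε := lt_of_le_of_lt h1 hz
    rw [Complex.sub_re, abs_lt] at this
    linarith
  have hmeas : ∀ z : ℂ, 0 < z.re → AEStronglyMeasurable
      (fun ρ : ℝ => ((ρ ^ (2*α-1) : ℝ) : ℂ) / ((ρ:ℂ)^2 + z)) (volume.restrict (Ioi 0)) :=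
    fun z hz => (Fc_integrable hα0 hα1 hz).aestronglyMeasurable
  have hmeas' : AEStronglyMeasurable
      (fun ρ : ℝ => -(((ρ ^ (2*α-1) : ℝ) : ℂ) / ((ρ:ℂ)^2 + z₀)^2)) (volume.restrict (Ioi 0)) := by
    refine (ContinuousOn.aestronglyMeasurable ?_ measurableSet_Ioi).neg
    apply ContinuousOn.div
    · exact Complex.continuous_ofReal.comp_continuousOn
        (fun x hx => (Real.continuousAt_rpow_const x _ (Or.inl (ne_of_gt hx))).continuousWithinAt)
    · fun_prop
    · exact fun x _ => pow_ne_zero 2 (denom_ne hz₀' x)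
  have hbound : IntegrableOn (fun ρ : ℝ => ρ ^ (2*α-1) / (ρ^2+ε)^2) (Ioi 0) :=
    integrableOn_aux hα0 hα1 hε 2 one_le_two
  have key := hasDerivAt_integral_of_dominated_loc_of_deriv_le (F := fun z (ρ : ℝ) =>
      ((ρ ^ (2*α-1) : ℝ) : ℂ) / ((ρ:ℂ)^2 + z))
      (F' := fun z (ρ : ℝ) => -(((ρ ^ (2*α-1) : ℝ) : ℂ) / ((ρ:ℂ)^2 + z)^2))
      (bound := fun ρ => ρ ^ (2*α-1) / (ρ^2+ε)^2) (x₀ := z₀) (Metric.ball_mem_nhds z₀ hε)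
      ?_ (Fc_integrable hα0 hα1 hz₀') hmeas' ?_ hbound ?_
  · exact (key.2.differentiableAt).differentiableWithinAt
  · filter_upwards [IsOpen.mem_nhds (isOpen_lt continuous_const Complex.continuous_re) hz₀']
      with z hz
    exact hmeas z hz
  · filter_upwards [ae_restrict_mem measurableSet_Ioi] with ρ hρ
    intro z hz
    have hzre : ε ≤ z.re := hball z hz
    have hρ0 : (0:ℝ) < ρ := hρ
    rw [norm_neg, norm_div, Complex.norm_real, Real.norm_eq_abs, norm_pow,
      _root_.abs_of_nonneg (Real.rpow_nonneg hρ0.le _)]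
    apply div_le_div_of_nonneg_left (by positivity) (by positivity)
    have := norm_denom_ge hzre ρ
    nlinarith [norm_nonneg ((ρ:ℂ)^2 + z), sq_nonneg ρ]
  · refine Filter.Eventually.of_forall (fun ρ => fun z hz => ?_)
    have hzre : ε ≤ z.re := hball z hz
    have hne : ((ρ:ℂ)^2 + z) ≠ 0 := denom_ne (lt_of_lt_of_le hε hzre) ρ
    have h := (hasDerivAt_const z (((ρ ^ (2*α-1) : ℝ) : ℂ))).div
      ((hasDerivAt_id z).const_add ((ρ:ℂ)^2)) hne
    convert h using 1
    · rfl
    · rfl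
    · simp only [id]; ring

lemma Gc_real (hα0 : 0 < α) (hα1 : α < 1) {c : ℝ} (hc : 0 < c) :
    Gc α (c : ℂ) = ((c ^ (α-1) * (π / (2 * Real.sin (π*α))) : ℝ) : ℂ) := by
  rw [Gc, show ((α:ℂ) - 1) = ((α - 1 : ℝ) : ℂ) by push_cast; ring,
    ← Complex.ofReal_cpow hc.le, ← Complex.ofReal_mul]
  push_cast
  ring

lemma FG_eq (hα0 : 0 < α) (hα1 : α < 1) {z : ℂ} (hz : 0 < z.re) : Fc α z = Gc α z := by
  set U : Set ℂ := {z : ℂ | 0 < z.re} with hU_def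
  have hU : IsOpen U := isOpen_lt continuous_const Complex.continuous_re
  have hF : AnalyticOnNhd ℂ (Fc α) U := (Fc_diff hα0 hα1).analyticOnNhd hU
  have hG : AnalyticOnNhd ℂ (Gc α) U := by
    refine DifferentiableOn.analyticOnNhd (fun w hw => ?_) hU
    have hw' : (0:ℝ) < w.re := hw
    have : DifferentiableAt ℂ (fun z : ℂ => z ^ ((α:ℂ) - 1)) w :=
      ((Complex.hasStrictDerivAt_cpow_const (Or.inl hw')).hasDerivAt).differentiableAt
    exact ((this.const_mul _)).differentiableWithinAt
  have hpre : IsPreconnected U := (convex_halfSpace_re_gt 0).isPreconnected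
  have h1 : (1:ℂ) ∈ U := by simp [hU_def]
  have hseq : Filter.Tendsto (fun n : ℕ => (((1 + 1/(n+1) : ℝ)) : ℂ)) Filter.atTop (𝓝[≠] (1:ℂ)) := by
    rw [tendsto_nhdsWithin_iff]
    constructor
    · have : Filter.Tendsto (fun n : ℕ => (1 + 1/(n+1) : ℝ)) Filter.atTop (𝓝 1) := by
        have h0 : Filter.Tendsto (fun n : ℕ => (1/(n+1) : ℝ)) Filter.atTop (𝓝 0) :=
          tendsto_one_div_add_atTop_nhds_zero_nat
        simpa using (tendsto_const_nhds (x := (1:ℝ))).add h0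
      have := (Complex.continuous_ofReal.tendsto 1).comp this
      simpa [Function.comp_def] using this
    · refine Filter.Eventually.of_forall (fun n => ?_)
      simp only [Set.mem_compl_iff, Set.mem_singleton_iff]
      intro h
      rw [show (1:ℂ) = ((1:ℝ):ℂ) by norm_num] at h
      have := Complex.ofReal_inj.mp h
      have hn : (0:ℝ) < 1/(n+1) := by positivity
      linarith
  have hfreq : ∃ᶠ w in 𝓝[≠] (1:ℂ), Fc α w = Gc α w := by
    refine hseq.frequently (Filter.Frequently.of_forall (fun n => ?_))
    have hc : (0:ℝ) < 1 + 1/(n+1) := by positivity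
    rw [Fc_real hα0 hα1 hc, Gc_real hα0 hα1 hc]
  exact hF.eqOn_of_preconnected_of_frequently_eq hG hpre h1 hfreq hz

end CPart

/-- Lemma 7.2 written with the principal complex power. -/
theorem stmt_9 (α η ω : ℝ) (hα0 : 0 < α) (hα1 : α < 1) (hη : 0 < η) (hω : ω ≠ 0) :
    ∫ ρ in Set.Ioi (0 : ℝ), ρ ^ (2 * α - 1) / ((ρ ^ 2 + η) ^ 2 + ω ^ 2) =
      -π * (((η : ℂ) + Complex.I * (ω : ℂ)) ^ ((α : ℂ) - 1)).im /
        (2 * ω * Real.sin (α * π)) := by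
  have hsin : 0 < Real.sin (π*α) :=
    Real.sin_pos_of_pos_of_lt_pi (by positivity) (by nlinarith [Real.pi_pos])
  set v : ℂ := (η:ℂ) + Complex.I * ω with hv_def
  set w : ℂ := (η:ℂ) - Complex.I * ω with hw_def
  have hwre : 0 < w.re := by
    simp only [hw_def, Complex.sub_re, Complex.mul_re, Complex.I_re, Complex.I_im,
      Complex.ofReal_re, Complex.ofReal_im]
    simpa using hη
  have hint := Fc_integrable hα0 hα1 hwre
  have him : ∀ ρ ∈ Ioi (0:ℝ), ρ ^ (2*α-1) / ((ρ^2+η)^2 + ω^2)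
      = (1/ω) * ((((ρ ^ (2*α-1) : ℝ) : ℂ) / ((ρ:ℂ)^2 + w)).im) := by
    intro ρ hρ
    have hre : ((ρ:ℂ)^2 + w).re = ρ^2 + η := by
      simp [hw_def, Complex.add_re, Complex.sub_re, Complex.mul_re, ← Complex.ofReal_pow]
    have him' : ((ρ:ℂ)^2 + w).im = -ω := by
      simp [hw_def, Complex.add_im, Complex.sub_im, Complex.mul_im, ← Complex.ofReal_pow]
    rw [Complex.div_im, Complex.normSq_apply, hre, him']
    simp only [Complex.ofReal_re, Complex.ofReal_im]
    rw [show (ρ^2+η)*(ρ^2+η) + -ω * -ω = (ρ^2+η)^2+ω^2 by ring]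
    rw [show (0:ℝ) * (ρ^2+η) / ((ρ^2+η)^2+ω^2) - ρ^(2*α-1) * -ω / ((ρ^2+η)^2+ω^2)
        = ω * (ρ^(2*α-1) / ((ρ^2+η)^2+ω^2)) by ring]
    rw [← mul_assoc, one_div, inv_mul_cancel₀ hω, one_mul]
  rw [setIntegral_congr_fun measurableSet_Ioi him, MeasureTheory.integral_const_mul]
  have hII : (∫ ρ in Ioi (0:ℝ), (((ρ ^ (2*α-1) : ℝ) : ℂ) / ((ρ:ℂ)^2 + w)).im)
      = (∫ ρ in Ioi (0:ℝ), ((ρ ^ (2*α-1) : ℝ) : ℂ) / ((ρ:ℂ)^2 + w)).im :=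
    integral_im hint
  rw [hII]
  have hFG : (∫ ρ in Ioi (0:ℝ), ((ρ ^ (2*α-1) : ℝ) : ℂ) / ((ρ:ℂ)^2 + w)) = Gc α w := by
    rw [← FG_eq hα0 hα1 hwre]; rfl
  rw [hFG, Gc]
  have hwv : w = (starRingEnd ℂ) v := by
    rw [hv_def, hw_def]
    apply Complex.ext <;> simp
  have harg : v.arg ≠ π := by
    intro h
    rw [Complex.arg_eq_pi_iff] at h
    have : v.re = η := by
      simp [hv_def, Complex.add_re, Complex.mul_re]
    linarith [h.1, this ▸ h.1]
  have hconj : w ^ ((α:ℂ) - 1) = (starRingEnd ℂ) (v ^ ((α:ℂ) - 1)) := by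
    rw [hwv, Complex.conj_cpow _ _ harg]
    congr 1
    simp [Complex.conj_ofReal]
  rw [hconj]
  have h5 : ((((π / (2*Real.sin (π*α)) : ℝ)):ℂ) * (starRingEnd ℂ) (v ^ ((α:ℂ)-1))).im
      = (π/(2*Real.sin (π*α))) * (-((v ^ ((α:ℂ)-1)).im)) := by
    rw [Complex.mul_im]
    simp only [Complex.ofReal_re, Complex.ofReal_im, Complex.conj_im, Complex.conj_re,
      zero_mul, add_zero]
  rw [h5, show α * π = π * α from mul_comm α π]
  ring
end

section
/- Let 0 < α < 1 and η > 0. Then there exists a constant C > 0 such that for every ω ∈ ℝ, ∫₀^∞ ρ^{2α−1} / ((ρ² + η)² + ω²) dρ ≤ C·(η² + ω²)^{(α−2)/2}. -/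
open MeasureTheory Real

lemma aux_integrable_s10 (α : ℝ) (hα0 : 0 < α) (hα1 : α < 1) {s : ℝ} (hs : 0 < s) :
    IntegrableOn (fun u : ℝ => u ^ (2 * α - 1) / (u ^ 4 + s)) (Set.Ioi 0) := by
  have hmeas : Measurable (fun u : ℝ => u ^ (2 * α - 1) / (u ^ 4 + s)) := by
    fun_prop
  have h1 : IntegrableOn (fun u : ℝ => u ^ (2 * α - 1) / (u ^ 4 + s)) (Set.Ioc 0 1) := by
    have hb : IntegrableOn (fun u : ℝ => s⁻¹ * u ^ (2 * α - 1)) (Set.Ioc 0 1) := by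
      have := (intervalIntegral.intervalIntegrable_rpow' (a := 0) (b := 1)
        (r := 2 * α - 1) (by linarith)).1
      exact this.const_mul _
    refine hb.mono' (hmeas.aestronglyMeasurable.restrict) ?_
    filter_upwards [ae_restrict_mem measurableSet_Ioc] with u hu
    have hu0 : 0 < u := hu.1
    have hd : s ≤ u ^ 4 + s := by nlinarith [pow_pos hu0 4]
    rw [Real.norm_eq_abs, abs_of_nonneg (by positivity)]
    rw [div_le_iff₀ (by positivity)]
    calc u ^ (2 * α - 1) = s⁻¹ * u ^ (2 * α - 1) * s := by
          field_simp
      _ ≤ s⁻¹ * u ^ (2 * α - 1) * (u ^ 4 + s) := by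
          apply mul_le_mul_of_nonneg_left hd (by positivity)
  have h2 : IntegrableOn (fun u : ℝ => u ^ (2 * α - 1) / (u ^ 4 + s)) (Set.Ioi 1) := by
    have hb : IntegrableOn (fun u : ℝ => u ^ (2 * α - 5)) (Set.Ioi 1) :=
      integrableOn_Ioi_rpow_of_lt (by linarith) one_pos
    refine hb.mono' (hmeas.aestronglyMeasurable.restrict) ?_
    filter_upwards [ae_restrict_mem measurableSet_Ioi] with u hu
    have hu1 : (1:ℝ) < u := hu
    have hu0 : 0 < u := lt_trans one_pos hu1
    rw [Real.norm_eq_abs, abs_of_nonneg (by positivity)]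
    have h4 : u ^ 4 = u ^ ((4:ℝ)) := by
      rw [← Real.rpow_natCast u 4]; norm_num
    calc u ^ (2 * α - 1) / (u ^ 4 + s) ≤ u ^ (2 * α - 1) / u ^ 4 := by
          apply div_le_div_of_nonneg_left (by positivity) (by positivity)
          nlinarith [pow_pos hu0 4]
      _ = u ^ (2 * α - 5) := by
          rw [h4, ← Real.rpow_sub hu0]; congr 1; ring
  have hunion : Set.Ioi (0:ℝ) = Set.Ioc 0 1 ∪ Set.Ioi 1 :=
    (Set.Ioc_union_Ioi_eq_Ioi (by norm_num)).symm
  rw [hunion]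
  exact h1.union h2

/-- Uniform bound of order (η² + ω²)^{(α−2)/2} for the integral of Lemma 7.2. -/
theorem stmt_10 (α η : ℝ) (hα0 : 0 < α) (hα1 : α < 1) (hη : 0 < η) :
    ∃ C : ℝ, 0 < C ∧ ∀ ω : ℝ,
      (∫ ρ in Set.Ioi (0 : ℝ), ρ ^ (2 * α - 1) / ((ρ ^ 2 + η) ^ 2 + ω ^ 2)) ≤
        C * (η ^ 2 + ω ^ 2) ^ ((α - 2) / 2) := by
  set I := ∫ u in Set.Ioi (0:ℝ), u ^ (2 * α - 1) / (u ^ 4 + 1) with hIdef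
  have hI0 : 0 ≤ I := by
    apply setIntegral_nonneg measurableSet_Ioi
    intro u hu
    have : (0:ℝ) < u := hu
    positivity
  refine ⟨2 * I + 1, by positivity, fun ω => ?_⟩
  set s := η ^ 2 + ω ^ 2 with hsdef
  have hs0 : 0 < s := by positivity
  set r := Real.sqrt s with hrdef
  have hr0 : 0 < r := Real.sqrt_pos.mpr hs0
  have hr2 : r ^ 2 = s := Real.sq_sqrt hs0.le
  set c := Real.sqrt r with hcdef
  have hc0 : 0 < c := Real.sqrt_pos.mpr hr0
  have hc2 : c ^ 2 = r := Real.sq_sqrt hr0.le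
  have hc4 : c ^ 4 = s := by
    have h : c ^ 4 = (c ^ 2) ^ 2 := by ring
    rw [h, hc2, hr2]
  have hrpos : (0:ℝ) ≤ r ^ (α - 2) := (Real.rpow_pos_of_pos hr0 _).le
  -- scaling identity
  have hscale : (∫ ρ in Set.Ioi (0:ℝ), ρ ^ (2 * α - 1) / (ρ ^ 4 + s))
      = r ^ (α - 2) * I := by
    have key := integral_comp_mul_left_Ioi
      (fun ρ => ρ ^ (2 * α - 1) / (ρ ^ 4 + s)) 0 hc0
    rw [mul_zero] at key
    have lhs_eq : (∫ x in Set.Ioi (0:ℝ), (c * x) ^ (2 * α - 1) / ((c * x) ^ 4 + s))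
        = (c ^ (2 * α - 1) / s) * I := by
      rw [hIdef, ← integral_const_mul]
      apply setIntegral_congr_fun measurableSet_Ioi
      intro x hx
      have hx0 : (0:ℝ) < x := hx
      dsimp only
      have hmul : (c * x) ^ (2 * α - 1) = c ^ (2 * α - 1) * x ^ (2 * α - 1) :=
        Real.mul_rpow hc0.le hx0.le
      have hpow : (c * x) ^ 4 = s * x ^ 4 := by
        rw [mul_pow, hc4]
      rw [hmul, hpow]
      have hx4 : (0:ℝ) < x ^ 4 + 1 := by positivity
      field_simp
    rw [lhs_eq, smul_eq_mul] at key
    have hI2 : (∫ ρ in Set.Ioi (0:ℝ), ρ ^ (2 * α - 1) / (ρ ^ 4 + s))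
        = c * ((c ^ (2 * α - 1) / s) * I) := by
      rw [key, ← mul_assoc, mul_inv_cancel₀ hc0.ne', one_mul]
    rw [hI2]
    have hcc : c * c ^ (2 * α - 1) = c ^ (2 * α) := by
      nth_rewrite 1 [← Real.rpow_one c]
      rw [← Real.rpow_add hc0]
      norm_num
    have hcr : c ^ (2 * α) = r ^ α := by
      rw [hcdef, Real.sqrt_eq_rpow, ← Real.rpow_mul hr0.le]
      congr 1
      ring
    have hra : r ^ (α - 2) = r ^ α / s := by
      rw [Real.rpow_sub hr0]
      congr 1
      rw [← hr2, ← Real.rpow_natCast r 2]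
      norm_num
    rw [hra, ← mul_assoc, mul_div_assoc' c, hcc, hcr]
  have hse : s ^ ((α - 2) / 2) = r ^ (α - 2) := by
    rw [hrdef, Real.sqrt_eq_rpow, ← Real.rpow_mul hs0.le]
    congr 1
    ring
  -- comparison
  have hint : IntegrableOn (fun ρ : ℝ => 2 * (ρ ^ (2 * α - 1) / (ρ ^ 4 + s)))
      (Set.Ioi 0) := (aux_integrable_s10 α hα0 hα1 hs0).const_mul 2
  have hmono : (∫ ρ in Set.Ioi (0:ℝ), ρ ^ (2 * α - 1) / ((ρ ^ 2 + η) ^ 2 + ω ^ 2))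
      ≤ ∫ ρ in Set.Ioi (0:ℝ), 2 * (ρ ^ (2 * α - 1) / (ρ ^ 4 + s)) := by
    apply integral_mono_of_nonneg
    · filter_upwards [ae_restrict_mem measurableSet_Ioi] with ρ hρ
      have hρ0 : (0:ℝ) < ρ := hρ
      positivity
    · exact hint
    · filter_upwards [ae_restrict_mem measurableSet_Ioi] with ρ hρ
      have hρ0 : (0:ℝ) < ρ := hρ
      have hnum : (0:ℝ) ≤ ρ ^ (2 * α - 1) := (Real.rpow_pos_of_pos hρ0 _).le
      have hD : (ρ ^ 4 + s) / 2 ≤ (ρ ^ 2 + η) ^ 2 + ω ^ 2 := by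
        rw [hsdef]; nlinarith [sq_nonneg ρ, sq_nonneg (ρ^2 - η), mul_pos (mul_pos hρ0 hρ0) hη]
      have hD0 : (0:ℝ) < (ρ ^ 4 + s) / 2 := by positivity
      calc ρ ^ (2 * α - 1) / ((ρ ^ 2 + η) ^ 2 + ω ^ 2)
          ≤ ρ ^ (2 * α - 1) / ((ρ ^ 4 + s) / 2) :=
            div_le_div_of_nonneg_left hnum hD0 hD
        _ = 2 * (ρ ^ (2 * α - 1) / (ρ ^ 4 + s)) := by
            rw [div_div_eq_mul_div]; ring
  calc (∫ ρ in Set.Ioi (0:ℝ), ρ ^ (2 * α - 1) / ((ρ ^ 2 + η) ^ 2 + ω ^ 2))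
      ≤ ∫ ρ in Set.Ioi (0:ℝ), 2 * (ρ ^ (2 * α - 1) / (ρ ^ 4 + s)) := hmono
    _ = 2 * (r ^ (α - 2) * I) := by rw [← hscale, integral_const_mul]
    _ ≤ (2 * I + 1) * s ^ ((α - 2) / 2) := by
        rw [hse]; nlinarith [mul_nonneg hI0 hrpos]
end
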